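/- Every function meromorphic on all of ℂ can be written as the quotient of two entire functions. -/

import Mathlib

open Complex Filter Set Metric Topology

section WFac

variable {ι : Type*}

lemma logTaylor_differentiable (n : ℕ) : Differentiable ℂ (Complex.logTaylor n) := by
  unfold Complex.logTaylor
  apply Differentiable.fun_sum
  intro j _
  exact ((differentiable_const _).mul (differentiable_pow j)).div_const _

/-- The "unit" part of a Weierstrass-type elementary factor. -/
noncomputable def wunit (a : ι → ℂ) (d m : ι → ℕ) (i : ι) (z : ℂ) : ℂ :=
  if a i = 0 then 1 else
    (-(a i))⁻¹ ^ d i * Complex.exp ((d i : ℂ) * (- Complex.logTaylor (m i + 1) (-(z / a i))))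

/-- Weierstrass-type elementary factor with a zero of order `d i` at `a i`. -/
noncomputable def wfac (a : ι → ℂ) (d m : ι → ℕ) (i : ι) (z : ℂ) : ℂ :=
  (z - a i) ^ d i * wunit a d m i z

/-- Logarithm of the elementary factor, valid for `‖z / a i‖ ≤ 1 / 2`. -/
noncomputable def wlog (a : ι → ℂ) (d m : ι → ℕ) (i : ι) (z : ℂ) : ℂ :=
  (d i : ℂ) * (Complex.log (1 - z / a i) - Complex.logTaylor (m i + 1) (-(z / a i)))

/-- The Weierstrass-type product. -/
noncomputable def wprod (a : ι → ℂ) (d m : ι → ℕ) (z : ℂ) : ℂ := ∏' i, wfac a d m i z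

variable {a : ι → ℂ} {d m : ι → ℕ} {i : ι} {z : ℂ} {u : ι → ℝ}

lemma wunit_ne_zero : wunit a d m i z ≠ 0 := by
  unfold wunit
  split_ifs with h
  · exact one_ne_zero
  · exact mul_ne_zero (pow_ne_zero _ (inv_ne_zero (neg_ne_zero.mpr h))) (Complex.exp_ne_zero _)

lemma wunit_differentiable : Differentiable ℂ (wunit a d m i) := by
  unfold wunit
  split_ifs with h
  · exact differentiable_const _
  · refine (differentiable_const _).mul (Complex.differentiable_exp.comp ?_)
    refine (differentiable_const _).mul ?_
    exact ((logTaylor_differentiable _).comp ((differentiable_id.div_const _).neg)).neg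

lemma wfac_differentiable : Differentiable ℂ (wfac a d m i) :=
  ((differentiable_id.sub (differentiable_const _)).pow _).mul wunit_differentiable

lemma wfac_ne_zero (hz : z ≠ a i) : wfac a d m i z ≠ 0 :=
  mul_ne_zero (pow_ne_zero _ (sub_ne_zero.mpr hz)) wunit_ne_zero

lemma wfac_eq_zero (hd : d i ≠ 0) : wfac a d m i (a i) = 0 := by
  simp [wfac, sub_self, zero_pow hd]

lemma slit_aux (hz : ‖z / a i‖ ≤ 1 / 2) : 1 - z / a i ∈ Complex.slitPlane := by
  have : (1 : ℂ) - z / a i = 1 + (-(z / a i)) := by ring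
  rw [this]
  exact Complex.mem_slitPlane_of_norm_lt_one (by rw [norm_neg]; linarith)

lemma wfac_eq_exp_wlog (ha : a i ≠ 0) (hz : ‖z / a i‖ ≤ 1 / 2) :
    wfac a d m i z = Complex.exp (wlog a d m i z) := by
  have hslit := slit_aux (a := a) (i := i) hz
  have h1 : (1 : ℂ) - z / a i ≠ 0 := Complex.slitPlane_ne_zero hslit
  have key : (z - a i) * (-(a i))⁻¹ = 1 - z / a i := by
    field_simp [ha]
    ring
  unfold wfac wunit wlog
  rw [if_neg ha, ← mul_assoc, ← mul_pow, key]
  rw [show (d i : ℂ) * (Complex.log (1 - z / a i) - Complex.logTaylor (m i + 1) (-(z / a i)))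
      = (d i : ℂ) * Complex.log (1 - z / a i)
        + (d i : ℂ) * (- Complex.logTaylor (m i + 1) (-(z / a i))) by ring]
  rw [Complex.exp_add, Complex.exp_nat_mul, Complex.exp_nat_mul, Complex.exp_log h1]

lemma norm_wlog_le (hz : ‖z / a i‖ ≤ 1 / 2) :
    ‖wlog a d m i z‖ ≤ (d i : ℝ) * 2 * (1 / 2) ^ (m i + 1) := by
  have hlt : ‖-(z / a i)‖ < 1 := by rw [norm_neg]; linarith
  have := Complex.norm_log_sub_logTaylor_le (m i) hlt
  have heq : Complex.log (1 + -(z / a i)) = Complex.log (1 - z / a i) := by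
    rw [show (1 : ℂ) + -(z / a i) = 1 - z / a i by ring]
  rw [heq, norm_neg] at this
  have hb : ‖z / a i‖ ^ (m i + 1) * (1 - ‖z / a i‖)⁻¹ / (m i + 1) ≤ 2 * (1 / 2) ^ (m i + 1) := by
    have h0 : (0:ℝ) ≤ ‖z / a i‖ := norm_nonneg _
    have hp : ‖z / a i‖ ^ (m i + 1) ≤ (1 / 2 : ℝ) ^ (m i + 1) := pow_le_pow_left₀ h0 hz _
    have hi : (1 - ‖z / a i‖)⁻¹ ≤ 2 := by
      rw [inv_le_comm₀ (by linarith) (by norm_num)]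
      linarith
    have hd : (1 : ℝ) ≤ (m i : ℝ) + 1 := by
      have := Nat.cast_nonneg (α := ℝ) (m i); linarith
    have hinv : (0:ℝ) ≤ (1 - ‖z / a i‖)⁻¹ := inv_nonneg.mpr (by linarith)
    calc ‖z / a i‖ ^ (m i + 1) * (1 - ‖z / a i‖)⁻¹ / (m i + 1)
        ≤ ‖z / a i‖ ^ (m i + 1) * (1 - ‖z / a i‖)⁻¹ :=
          div_le_self (by positivity) hd
      _ ≤ (1 / 2 : ℝ) ^ (m i + 1) * 2 :=
          mul_le_mul hp hi hinv (by positivity)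
      _ = 2 * (1 / 2) ^ (m i + 1) := by ring
  calc ‖wlog a d m i z‖ = (d i : ℝ) * ‖Complex.log (1 - z / a i) - Complex.logTaylor (m i + 1) (-(z / a i))‖ := by
        rw [wlog, norm_mul]; norm_num
    _ ≤ (d i : ℝ) * (2 * (1 / 2) ^ (m i + 1)) := by
        apply mul_le_mul_of_nonneg_left (le_trans this hb) (Nat.cast_nonneg _)
    _ = (d i : ℝ) * 2 * (1 / 2) ^ (m i + 1) := by ring

lemma wlog_differentiableAt (hz : ‖z / a i‖ ≤ 1 / 2) :
    DifferentiableAt ℂ (wlog a d m i) z := by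
  refine (differentiableAt_const _).mul (DifferentiableAt.sub ?_ ?_)
  · have hslit := slit_aux (a := a) (i := i) hz
    exact (Complex.differentiableAt_log hslit).comp z
      (((differentiableAt_const _).sub (differentiableAt_id.div_const _)) : DifferentiableAt ℂ (fun w : ℂ => 1 - w / a i) z)
  · exact ((logTaylor_differentiable _).differentiableAt).comp z
      ((differentiableAt_id.div_const _).neg)
lemma wgeom_aux {R : ℝ} (hR : 0 < R) (hza : ‖z‖ < R) (hai : 2 * R ≤ ‖a i‖) :
    a i ≠ 0 ∧ ‖z / a i‖ ≤ 1 / 2 := by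
  have h0 : (0:ℝ) < ‖a i‖ := by linarith
  refine ⟨fun h => by simp [h] at h0, ?_⟩
  rw [norm_div, div_le_iff₀ h0]
  linarith


set_option maxHeartbeats 1000000 in
lemma wprod_structure (hu : Summable u)
    (hbd : ∀ i, (d i : ℝ) * 2 * (1 / 2) ^ (m i + 1) ≤ u i)
    {R : ℝ} (hR : 0 < R) (T : Finset ι) (hT : ∀ i ∉ T, 2 * R ≤ ‖a i‖)
    {z : ℂ} (hz : z ∈ Metric.ball (0:ℂ) R) :
    wprod a d m z = (∏ i ∈ T, wfac a d m i z)
      * Complex.exp (∑' i : ↑((↑T : Set ι)ᶜ), wlog a d m (↑i) z) := by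
  rw [Metric.mem_ball, dist_zero_right] at hz
  have key : ∀ i : ↑((↑T : Set ι)ᶜ), a (↑i) ≠ 0 ∧ ‖z / a ↑i‖ ≤ 1 / 2 :=
    fun i => wgeom_aux hR hz (hT _ (fun hmem => i.2 (Finset.mem_coe.mpr hmem)))
  have hs : Summable (fun i : ↑((↑T : Set ι)ᶜ) => wlog a d m (↑i) z) := by
    apply Summable.of_norm_bounded (hu.comp_injective Subtype.val_injective)
    exact fun i => (norm_wlog_le (key i).2).trans (hbd _)
  have hp : HasProd ((fun i => wfac a d m i z) ∘ (↑) : ↑((↑T : Set ι)ᶜ) → ℂ)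
      (Complex.exp (∑' i : ↑((↑T : Set ι)ᶜ), wlog a d m (↑i) z)) := by
    have h1 := hs.hasSum.cexp
    have heq : (Complex.exp ∘ fun i : ↑((↑T : Set ι)ᶜ) => wlog a d m (↑i) z)
        = ((fun i => wfac a d m i z) ∘ (↑) : ↑((↑T : Set ι)ᶜ) → ℂ) :=
      funext fun i => (wfac_eq_exp_wlog (key i).1 (key i).2).symm
    rwa [heq] at h1
  exact ((T.hasProd (fun i => wfac a d m i z)).mul_compl hp).tprod_eq

lemma wtail_differentiableOn (hu : Summable u)
    (hbd : ∀ i, (d i : ℝ) * 2 * (1 / 2) ^ (m i + 1) ≤ u i)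
    {R : ℝ} (hR : 0 < R) (T : Finset ι) (hT : ∀ i ∉ T, 2 * R ≤ ‖a i‖) :
    DifferentiableOn ℂ (fun z => ∑' i : ↑((↑T : Set ι)ᶜ), wlog a d m (↑i) z)
      (Metric.ball (0:ℂ) R) := by
  apply differentiableOn_tsum_of_summable_norm
    (hu.comp_injective (Subtype.val_injective : Function.Injective ((↑) : ↑((↑T : Set ι)ᶜ) → ι)))
    ?_ Metric.isOpen_ball ?_
  · intro i z hz
    rw [Metric.mem_ball, dist_zero_right] at hz
    exact (wlog_differentiableAt (wgeom_aux hR hz (hT _ (fun hmem => i.2 (Finset.mem_coe.mpr hmem)))).2).differentiableWithinAt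
  · intro i w hw
    rw [Metric.mem_ball, dist_zero_right] at hw
    exact (norm_wlog_le (wgeom_aux hR hw (hT _ (fun hmem => i.2 (Finset.mem_coe.mpr hmem)))).2).trans (hbd _)

end WFac

lemma nat_half_pow_le_one (n : ℕ) : (n : ℝ) * (1 / 2) ^ n ≤ 1 := by
  have h1 : (n : ℝ) < 2 ^ n := by exact_mod_cast Nat.lt_two_pow_self
  have h2 : (0:ℝ) < 2 ^ n := by positivity
  rw [div_pow, one_pow, mul_one_div, div_le_one h2]
  exact le_of_lt h1

/-- Every function meromorphic on all of `ℂ` is a quotient of two entire functions. -/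
theorem meromorphic_eq_quotient_of_entire (f : ℂ → ℂ) (hf : MeromorphicOn f Set.univ) :
    ∃ g h : ℂ → ℂ, Differentiable ℂ g ∧ Differentiable ℂ h ∧ h ≠ 0 ∧
      ∀ z : ℂ, h z ≠ 0 → f z = g z / h z := by
  classical
  have H : ∀ s : ℂ, ∃ n : ℕ, AnalyticAt ℂ (fun z => (z - s) ^ n • f z) s :=
    fun s => hf s (Set.mem_univ s)
  choose d hd using H
  set S : Set ℂ := {z : ℂ | ¬ AnalyticAt ℂ f z} with hS_def
  have hSclosed : IsClosed S := by
    rw [hS_def, show {z : ℂ | ¬ AnalyticAt ℂ f z} = {z : ℂ | AnalyticAt ℂ f z}ᶜ from rfl]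
    exact (isOpen_analyticAt ℂ f).isClosed_compl
  have hd0 : ∀ s ∈ S, d s ≠ 0 := by
    intro s hs hds
    apply hs
    have := hd s
    rw [hds] at this
    simpa only [pow_zero, one_smul] using this
  have hnbhd : ∀ x : ℂ, {w : ℂ | w ≠ x → AnalyticAt ℂ f w} ∈ 𝓝 x := by
    intro x
    have h1 := (hf x (Set.mem_univ x)).eventually_analyticAt
    rw [eventually_nhdsWithin_iff] at h1
    exact h1
  have hfin : ∀ K : Set ℂ, IsCompact K → (S ∩ K).Finite := by
    intro K hK
    obtain ⟨t, _, ht⟩ := hK.elim_nhds_subcover (fun x => {w : ℂ | w ≠ x → AnalyticAt ℂ f w})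
      (fun x _ => hnbhd x)
    refine Set.Finite.subset t.finite_toSet ?_
    rintro z ⟨hzS, hzK⟩
    obtain ⟨x, hxt, hzx⟩ := Set.mem_iUnion₂.mp (ht hzK)
    by_cases hzx' : z = x
    · subst hzx'; exact hxt
    · exact absurd (hzx hzx') hzS
  have hScount : S.Countable := by
    have : S ⊆ ⋃ n : ℕ, S ∩ Metric.closedBall (0:ℂ) n := by
      intro z hz
      exact Set.mem_iUnion.mpr ⟨⌈‖z‖⌉₊, hz, by
        simpa [Metric.mem_closedBall, dist_zero_right] using Nat.le_ceil ‖z‖⟩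
    exact Set.Countable.mono this
      (Set.countable_iUnion fun n => (hfin _ (isCompact_closedBall _ _)).countable)
  have : Countable ↥S := hScount.to_subtype
  obtain ⟨e, he⟩ := exists_injective_nat ↥S
  -- the data for the Weierstrass-type product
  set A : ↥S → ℂ := Subtype.val with hA_def
  set D : ↥S → ℕ := fun i => d ↑i with hD_def
  set M : ↥S → ℕ := fun i => e i + D i with hM_def
  set U : ↥S → ℝ := fun i => (1/2 : ℝ) ^ (e i) with hU_def
  have hU : Summable U :=
    (summable_geometric_of_lt_one (by norm_num) (by norm_num)).comp_injective he
  have hbd : ∀ i, (D i : ℝ) * 2 * (1 / 2) ^ (M i + 1) ≤ U i := by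
    intro i
    have h1 : (D i : ℝ) * (1/2) ^ (D i) ≤ 1 := nat_half_pow_le_one _
    have h2 : (0:ℝ) ≤ (1/2 : ℝ) ^ (e i) := by positivity
    calc (D i : ℝ) * 2 * (1/2) ^ (e i + D i + 1)
        = ((D i : ℝ) * (1/2)^(D i)) * (1/2)^(e i) := by
          rw [pow_add, pow_add, pow_one]; ring
      _ ≤ 1 * (1/2)^(e i) := mul_le_mul_of_nonneg_right h1 h2
      _ = U i := one_mul _
  have Tfin : ∀ R : ℝ, {i : ↥S | ‖A i‖ < R}.Finite := by
    intro R
    have hKfin : (S ∩ Metric.closedBall (0:ℂ) |R|).Finite :=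
      hfin _ (isCompact_closedBall _ _)
    refine Set.Finite.subset
      (Set.Finite.preimage (Set.injOn_of_injective Subtype.val_injective) hKfin) ?_
    intro i hi
    refine Set.mem_preimage.mpr ⟨i.2, ?_⟩
    rw [Metric.mem_closedBall, dist_zero_right]
    exact le_trans (le_of_lt hi) (le_abs_self R)
  set W : ℂ → ℂ := wprod A D M with hW_def
  have hTprop : ∀ R : ℝ, ∀ i : ↥S, i ∉ (Tfin (2*R)).toFinset → 2 * R ≤ ‖A i‖ := by
    intro R i hi
    by_contra hlt
    exact hi ((Tfin (2*R)).mem_toFinset.mpr (lt_of_not_ge hlt))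
  have hW_diff : Differentiable ℂ W := by
    intro z₀
    set R : ℝ := ‖z₀‖ + 1 with hR_def
    have hR : 0 < R := by positivity
    set T := (Tfin (2*R)).toFinset with hT_def
    have hT : ∀ i ∉ T, 2 * R ≤ ‖A i‖ := hTprop R
    have hz₀ : z₀ ∈ Metric.ball (0:ℂ) R := by
      rw [Metric.mem_ball, dist_zero_right, hR_def]
      linarith
    have hRHS : DifferentiableOn ℂ (fun z => (∏ i ∈ T, wfac A D M i z)
        * Complex.exp (∑' i : ↑((↑T : Set ↥S)ᶜ), wlog A D M (↑i) z)) (Metric.ball (0:ℂ) R) := by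
      apply DifferentiableOn.mul
      · exact (Differentiable.fun_finsetProd fun i _ => wfac_differentiable).differentiableOn
      · exact Complex.differentiable_exp.comp_differentiableOn
          (wtail_differentiableOn hU hbd hR T hT)
    have hcongr : DifferentiableOn ℂ W (Metric.ball (0:ℂ) R) :=
      hRHS.congr (fun z hz => wprod_structure hU hbd hR T hT hz)
    exact hcongr.differentiableAt (Metric.isOpen_ball.mem_nhds hz₀)
  have hW_zero : ∀ s ∈ S, W s = 0 := by
    intro s hs
    set i₀ : ↥S := ⟨s, hs⟩ with hi₀_def
    set R : ℝ := ‖s‖ + 1 with hR_def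
    have hR : 0 < R := by positivity
    set T := (Tfin (2*R)).toFinset with hT_def
    have hT : ∀ i ∉ T, 2 * R ≤ ‖A i‖ := hTprop R
    have hsball : s ∈ Metric.ball (0:ℂ) R := by
      rw [Metric.mem_ball, dist_zero_right, hR_def]; linarith
    have hi₀T : i₀ ∈ T := by
      rw [hT_def, (Tfin (2*R)).mem_toFinset]
      show ‖A i₀‖ < 2 * R
      have : ‖A i₀‖ = ‖s‖ := rfl
      rw [this, hR_def]
      linarith [norm_nonneg s]
    rw [hW_def, wprod_structure hU hbd hR T hT hsball]
    have : wfac A D M i₀ s = 0 := by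
      have hAi : A i₀ = s := rfl
      have := wfac_eq_zero (a := A) (d := D) (m := M) (i := i₀) (hd0 s hs)
      rwa [hAi] at this
    rw [Finset.prod_eq_zero hi₀T this, zero_mul]
  have hW_ne : ∀ z, z ∉ S → W z ≠ 0 := by
    intro z hz
    set R : ℝ := ‖z‖ + 1 with hR_def
    have hR : 0 < R := by positivity
    set T := (Tfin (2*R)).toFinset with hT_def
    have hT : ∀ i ∉ T, 2 * R ≤ ‖A i‖ := hTprop R
    have hzball : z ∈ Metric.ball (0:ℂ) R := by
      rw [Metric.mem_ball, dist_zero_right, hR_def]; linarith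
    rw [hW_def, wprod_structure hU hbd hR T hT hzball]
    apply mul_ne_zero
    · rw [Finset.prod_ne_zero_iff]
      intro i _
      apply wfac_ne_zero
      intro hzi
      exact hz (hzi ▸ i.2)
    · exact Complex.exp_ne_zero _
  set g : ℂ → ℂ := fun z => if z ∈ S then limUnder (𝓝[≠] z) (fun w => f w * W w)
      else f z * W z with hg_def
  have hg_notS : ∀ z ∉ S, g z = f z * W z := fun z hz => if_neg hz
  have hg_diff : Differentiable ℂ g := by
    intro s
    by_cases hs : s ∈ S
    · -- the hard case: a pole of f
      set i₀ : ↥S := ⟨s, hs⟩ with hi₀_def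
      set R : ℝ := ‖s‖ + 1 with hR_def
      have hR : 0 < R := by positivity
      set T := (Tfin (2*R)).toFinset with hT_def
      have hT : ∀ i ∉ T, 2 * R ≤ ‖A i‖ := hTprop R
      have hsball : s ∈ Metric.ball (0:ℂ) R := by
        rw [Metric.mem_ball, dist_zero_right, hR_def]; linarith
      have hi₀T : i₀ ∈ T := by
        rw [hT_def, (Tfin (2*R)).mem_toFinset]
        show ‖A i₀‖ < 2 * R
        have hAi : ‖A i₀‖ = ‖s‖ := rfl
        rw [hAi, hR_def]
        linarith [norm_nonneg s]
      set ψ : ℂ → ℂ := fun z => wunit A D M i₀ z * ((∏ i ∈ T.erase i₀, wfac A D M i z)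
          * Complex.exp (∑' i : ↑((↑T : Set ↥S)ᶜ), wlog A D M (↑i) z)) with hψ_def
      set φ : ℂ → ℂ := fun z => (z - s) ^ (d s) • f z with hφ_def
      have hφ : AnalyticAt ℂ φ s := hd s
      have hψ : DifferentiableOn ℂ ψ (Metric.ball (0:ℂ) R) := by
        apply DifferentiableOn.mul (wunit_differentiable.differentiableOn)
        apply DifferentiableOn.mul
        · exact (Differentiable.fun_finsetProd fun i _ => wfac_differentiable).differentiableOn
        · exact Complex.differentiable_exp.comp_differentiableOn
            (wtail_differentiableOn hU hbd hR T hT)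
      have hkey : ∀ z ∈ Metric.ball (0:ℂ) R, f z * W z = φ z * ψ z := by
        intro z hz
        rw [hW_def, wprod_structure hU hbd hR T hT hz, ← Finset.mul_prod_erase T _ hi₀T]
        have hwf : wfac A D M i₀ z = (z - s) ^ (d s) * wunit A D M i₀ z := rfl
        simp only [hψ_def, hφ_def, hwf, smul_eq_mul]
        ring
      set Afun : ℂ → ℂ := fun z => φ z * ψ z with hAfun_def
      have hAdiff : DifferentiableAt ℂ Afun s :=
        (hφ.differentiableAt).mul (hψ.differentiableAt (Metric.isOpen_ball.mem_nhds hsball))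
      have hev : ∀ᶠ w in 𝓝 s, (w ≠ s → w ∉ S) ∧ f w * W w = Afun w := by
        filter_upwards [hnbhd s, Metric.isOpen_ball.mem_nhds hsball] with w h1 h2
        exact ⟨fun hne hwS => hwS (h1 hne), hkey w h2⟩
      have hgs : g s = Afun s := by
        rw [hg_def]
        show (if s ∈ S then limUnder (𝓝[≠] s) (fun w => f w * W w) else f s * W s) = Afun s
        rw [if_pos hs]
        apply Filter.Tendsto.limUnder_eq
        have htend : Filter.Tendsto Afun (𝓝[≠] s) (𝓝 (Afun s)) :=
          (hAdiff.continuousAt.tendsto).mono_left nhdsWithin_le_nhds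
        apply Filter.Tendsto.congr' ?_ htend
        filter_upwards [eventually_nhdsWithin_of_eventually_nhds hev] with w hw
        exact (hw.2).symm
      have hgA : g =ᶠ[𝓝 s] Afun := by
        filter_upwards [hev] with w hw
        by_cases hws : w = s
        · rw [hws]; exact hgs
        · have hwS : w ∉ S := hw.1 hws
          calc g w = f w * W w := hg_notS w hwS
            _ = Afun w := hw.2
      exact hAdiff.congr_of_eventuallyEq hgA
    · -- easy case
      have hfan : AnalyticAt ℂ f s := not_not.mp hs
      have hmul : DifferentiableAt ℂ (fun w => f w * W w) s :=
        (hfan.differentiableAt).mul (hW_diff s)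
      apply hmul.congr_of_eventuallyEq
      filter_upwards [hSclosed.isOpen_compl.mem_nhds hs] with w hw
      exact hg_notS w hw
  have hex : ∃ z₀ : ℂ, z₀ ∉ S := by
    by_contra hcon
    push_neg at hcon
    have hSuniv : S = Set.univ := Set.eq_univ_of_forall hcon
    have hcu : (Set.univ : Set ℂ).Countable := hSuniv ▸ hScount
    haveI hcC : Countable ℂ := Set.countable_univ_iff.mp hcu
    haveI : Countable ℝ := Complex.ofReal_injective.countable
    exact Cardinal.not_countable_real Set.countable_univ
  obtain ⟨z₀, hz₀⟩ := hex
  refine ⟨g, W, hg_diff, hW_diff, ?_, ?_⟩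
  · intro hW0
    exact hW_ne z₀ hz₀ (by rw [hW0]; rfl)
  · intro z hWz
    have hzS : z ∉ S := fun h => hWz (hW_zero z h)
    rw [hg_notS z hzS]
    exact (mul_div_cancel_right₀ (f z) hWz).symm
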